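/- Let G be a group generated by elements x₁,…,x_s, let u : G → ℤ be a group homomorphism, and let E ⊆ G be a finite nonempty subset such that u(g) = 1 for all g ∈ E and E is closed under conjugation (γ⁻¹gγ ∈ E for all g ∈ E, γ ∈ G). Fix t ∈ E. Then ker(u) is generated by the finite set {xᵢ t^{-u(xᵢ)} : 1 ≤ i ≤ s} ∪ {xᵢ⁻¹ t^{u(xᵢ)} : 1 ≤ i ≤ s} ∪ {g_j g_k⁻¹ : g_j, g_k ∈ E}. In particular ker(u) is finitely generated. -/

import Mathlib

/-- If `G` is generated by `x 1, …, x s`, `u : G → ℤ` is a homomorphism, and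
`E` is a finite nonempty conjugation-invariant subset with `u ≡ 1` on `E`,
then for any fixed `t ∈ E`, `ker u` is generated by the finite set
`{xᵢ t^{-u xᵢ}} ∪ {xᵢ⁻¹ t^{u xᵢ}} ∪ {g h⁻¹ : g, h ∈ E}`;
in particular `ker u` is finitely generated. -/
theorem stmt3 {G : Type*} [Group G] (s : ℕ) (x : Fin s → G)
    (hgen : Subgroup.closure (Set.range x) = ⊤)
    (u : G →* Multiplicative ℤ)
    (E : Finset G) (hE : E.Nonempty)
    (hu1 : ∀ g ∈ E, u g = Multiplicative.ofAdd 1)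
    (hconj : ∀ g ∈ E, ∀ γ : G, γ⁻¹ * g * γ ∈ E)
    (t : G) (ht : t ∈ E) :
    u.ker = Subgroup.closure
      ((Set.range fun i => x i * t ^ (-(u (x i)).toAdd)) ∪
       (Set.range fun i => (x i)⁻¹ * t ^ (u (x i)).toAdd) ∪
       {w : G | ∃ gj ∈ E, ∃ gk ∈ E, w = gj * gk⁻¹}) ∧
    (u.ker : Subgroup G).FG := by
  set S : Set G :=
      ((Set.range fun i => x i * t ^ (-(u (x i)).toAdd)) ∪
       (Set.range fun i => (x i)⁻¹ * t ^ (u (x i)).toAdd) ∪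
       {w : G | ∃ gj ∈ E, ∃ gk ∈ E, w = gj * gk⁻¹}) with hS
  set H : Subgroup G := Subgroup.closure S with hH
  -- membership helpers
  have memS3 : ∀ c ∈ E, ∀ h ∈ E, c * h⁻¹ ∈ H := by
    intro c hc h hh
    exact Subgroup.subset_closure (Or.inr ⟨c, hc, h, hh, rfl⟩)
  have hconj' : ∀ g ∈ E, ∀ γ : G, γ * g * γ⁻¹ ∈ E := by
    intro g hg γ
    simpa using hconj g hg γ⁻¹
  -- the four flavors
  have fct : ∀ c ∈ E, c * t⁻¹ ∈ H := fun c hc => memS3 c hc t ht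
  have ftc : ∀ c ∈ E, t * c⁻¹ ∈ H := fun c hc => memS3 t ht c hc
  have ftic : ∀ c ∈ E, t⁻¹ * c ∈ H := by
    intro c hc
    have : (t⁻¹ * c * t) * t⁻¹ ∈ H := fct _ (hconj c hc t)
    simpa [mul_assoc] using this
  have fcit : ∀ c ∈ E, c⁻¹ * t ∈ H := by
    intro c hc
    have := (ftic c hc)
    simpa using H.inv_mem this
  -- conjugation by t and t⁻¹ preserves H
  have tconj : ∀ h ∈ H, t * h * t⁻¹ ∈ H := by
    intro h hh
    induction hh using Subgroup.closure_induction with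
    | mem a ha =>
      rcases ha with (⟨i, rfl⟩ | ⟨i, rfl⟩) | ⟨g, hg, k, hk, rfl⟩
      · have c1 : x i * t * (x i)⁻¹ ∈ E := hconj' t ht (x i)
        have h1 : t * (x i * t * (x i)⁻¹)⁻¹ ∈ H := ftc _ c1
        have h2 : x i * t ^ (-(u (x i)).toAdd) ∈ H := Subgroup.subset_closure (Or.inl (Or.inl ⟨i, rfl⟩))
        have : (t * (x i * t * (x i)⁻¹)⁻¹) * (x i * t ^ (-(u (x i)).toAdd)) =
            t * (x i * t ^ (-(u (x i)).toAdd)) * t⁻¹ := by group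
        exact this ▸ H.mul_mem h1 h2
      · have c1 : (x i)⁻¹ * t * x i ∈ E := hconj t ht (x i)
        have h1 : t * ((x i)⁻¹ * t * x i)⁻¹ ∈ H := ftc _ c1
        have h2 : (x i)⁻¹ * t ^ ((u (x i)).toAdd) ∈ H := Subgroup.subset_closure (Or.inl (Or.inr ⟨i, rfl⟩))
        have : (t * ((x i)⁻¹ * t * x i)⁻¹) * ((x i)⁻¹ * t ^ ((u (x i)).toAdd)) =
            t * ((x i)⁻¹ * t ^ ((u (x i)).toAdd)) * t⁻¹ := by group
        exact this ▸ H.mul_mem h1 h2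
      · have h1 : (t * g * t⁻¹) * (t * k * t⁻¹)⁻¹ ∈ H :=
          memS3 _ (hconj' g hg t) _ (hconj' k hk t)
        have : (t * g * t⁻¹) * (t * k * t⁻¹)⁻¹ = t * (g * k⁻¹) * t⁻¹ := by group
        exact this ▸ h1
    | one => simpa using H.one_mem
    | mul a b _ _ iha ihb =>
      have : (t * a * t⁻¹) * (t * b * t⁻¹) = t * (a * b) * t⁻¹ := by group
      exact this ▸ H.mul_mem iha ihb
    | inv a _ iha =>
      have : (t * a * t⁻¹)⁻¹ = t * a⁻¹ * t⁻¹ := by group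
      exact this ▸ H.inv_mem iha
  have tconj' : ∀ h ∈ H, t⁻¹ * h * t ∈ H := by
    intro h hh
    induction hh using Subgroup.closure_induction with
    | mem a ha =>
      rcases ha with (⟨i, rfl⟩ | ⟨i, rfl⟩) | ⟨g, hg, k, hk, rfl⟩
      · have c1 : x i * t * (x i)⁻¹ ∈ E := hconj' t ht (x i)
        have h1 : t⁻¹ * (x i * t * (x i)⁻¹) ∈ H := ftic _ c1
        have h2 : x i * t ^ (-(u (x i)).toAdd) ∈ H := Subgroup.subset_closure (Or.inl (Or.inl ⟨i, rfl⟩))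
        have : (t⁻¹ * (x i * t * (x i)⁻¹)) * (x i * t ^ (-(u (x i)).toAdd)) =
            t⁻¹ * (x i * t ^ (-(u (x i)).toAdd)) * t := by group
        exact this ▸ H.mul_mem h1 h2
      · have c1 : (x i)⁻¹ * t * x i ∈ E := hconj t ht (x i)
        have h1 : t⁻¹ * ((x i)⁻¹ * t * x i) ∈ H := ftic _ c1
        have h2 : (x i)⁻¹ * t ^ ((u (x i)).toAdd) ∈ H := Subgroup.subset_closure (Or.inl (Or.inr ⟨i, rfl⟩))
        have : (t⁻¹ * ((x i)⁻¹ * t * x i)) * ((x i)⁻¹ * t ^ ((u (x i)).toAdd)) =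
            t⁻¹ * ((x i)⁻¹ * t ^ ((u (x i)).toAdd)) * t := by group
        exact this ▸ H.mul_mem h1 h2
      · have h1 : (t⁻¹ * g * t) * (t⁻¹ * k * t)⁻¹ ∈ H :=
          memS3 _ (hconj g hg t) _ (hconj k hk t)
        have : (t⁻¹ * g * t) * (t⁻¹ * k * t)⁻¹ = t⁻¹ * (g * k⁻¹) * t := by group
        exact this ▸ h1
    | one => simpa using H.one_mem
    | mul a b _ _ iha ihb =>
      have : (t⁻¹ * a * t) * (t⁻¹ * b * t) = t⁻¹ * (a * b) * t := by group
      exact this ▸ H.mul_mem iha ihb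
    | inv a _ iha =>
      have : (t⁻¹ * a * t)⁻¹ = t⁻¹ * a⁻¹ * t := by group
      exact this ▸ H.inv_mem iha
  have zconj : ∀ m : ℤ, ∀ h ∈ H, t ^ m * h * t ^ (-m) ∈ H := by
    intro m
    induction m using Int.induction_on with
    | zero => intro h hh; simpa using hh
    | succ n ih =>
      intro h hh
      have h1 := tconj _ (ih h hh)
      have : t * (t ^ (n : ℤ) * h * t ^ (-(n : ℤ))) * t⁻¹ =
          t ^ ((n : ℤ) + 1) * h * t ^ (-((n : ℤ) + 1)) := by group
      exact this ▸ h1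
    | pred n ih =>
      intro h hh
      have h1 := tconj' _ (ih h hh)
      have : t⁻¹ * (t ^ (-(n : ℤ)) * h * t ^ (-(-(n : ℤ)))) * t =
          t ^ (-(n : ℤ) - 1) * h * t ^ (-(-(n : ℤ) - 1)) := by group
      exact this ▸ h1
  -- main claim: every g satisfies g * t^{-u g} ∈ H
  have key : ∀ g : G, g * t ^ (-(u g).toAdd) ∈ H := by
    have : ∀ g ∈ Subgroup.closure (Set.range x), g * t ^ (-(u g).toAdd) ∈ H := by
      intro g hg
      induction hg using Subgroup.closure_induction with
      | mem a ha =>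
        rcases ha with ⟨i, rfl⟩
        exact Subgroup.subset_closure (Or.inl (Or.inl ⟨i, rfl⟩))
      | one => simpa using H.one_mem
      | mul a b _ _ iha ihb =>
        have hm : (u (a * b)).toAdd = (u a).toAdd + (u b).toAdd := by
          simp [map_mul]
        have h1 : (a * t ^ (-(u a).toAdd)) *
            (t ^ ((u a).toAdd) * (b * t ^ (-(u b).toAdd)) * t ^ (-(u a).toAdd)) ∈ H :=
          H.mul_mem iha (zconj _ _ ihb)
        have : (a * t ^ (-(u a).toAdd)) *
            (t ^ ((u a).toAdd) * (b * t ^ (-(u b).toAdd)) * t ^ (-(u a).toAdd)) =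
            (a * b) * t ^ (-((u a).toAdd + (u b).toAdd)) := by group
        rw [hm]
        exact this ▸ h1
      | inv a _ iha =>
        have hm : (u a⁻¹).toAdd = -(u a).toAdd := by simp
        have h1 : t ^ (-(u a).toAdd) * (a * t ^ (-(u a).toAdd))⁻¹ * t ^ (-(-(u a).toAdd)) ∈ H :=
          zconj _ _ (H.inv_mem iha)
        have : t ^ (-(u a).toAdd) * (a * t ^ (-(u a).toAdd))⁻¹ * t ^ (-(-(u a).toAdd)) =
            a⁻¹ * t ^ (-(-(u a).toAdd)) := by group
        rw [hm]
        exact this ▸ h1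
    intro g
    exact this g (hgen ▸ Subgroup.mem_top g)
  have hut : u t = Multiplicative.ofAdd 1 := hu1 t ht
  have hker : u.ker = H := by
    apply le_antisymm
    · intro g hg
      have hg0 : (u g).toAdd = 0 := by
        simpa [MonoidHom.mem_ker] using hg
      have := key g
      rw [hg0] at this
      simpa using this
    · rw [hH]
      apply (Subgroup.closure_le _).mpr
      rintro w ((⟨i, rfl⟩ | ⟨i, rfl⟩) | ⟨g, hg, k, hk, rfl⟩)
      · simp [MonoidHom.mem_ker, map_mul, map_zpow, hut, ← ofAdd_zsmul]
      · simp [MonoidHom.mem_ker, map_mul, map_zpow, hut, ← ofAdd_zsmul]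
      · simp [MonoidHom.mem_ker, map_mul, hu1 _ hg, hu1 _ hk]
  refine ⟨hker, ?_⟩
  rw [Subgroup.fg_iff]
  refine ⟨S, hker ▸ hH.symm ▸ rfl, ?_⟩
  have h3 : {w : G | ∃ gj ∈ E, ∃ gk ∈ E, w = gj * gk⁻¹} =
      Set.image2 (fun g h => g * h⁻¹) (E : Set G) (E : Set G) := by
    ext w
    simp [Set.mem_image2, eq_comm]
  exact ((Set.finite_range _).union (Set.finite_range _)).union
    (h3 ▸ Set.Finite.image2 _ E.finite_toSet E.finite_toSet)
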